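/- Let μ be a probability measure on ℝ with ∫ e^{λ x²} dμ < ∞ for some λ > 0. For Δt > 0, set R = sqrt((4/λ)|log Δt|) and define μ_Δt(A) = μ(A ∩ (−R,R)) + μ((−∞,−R])·δ_{−R}(A) + μ([R,∞))·δ_R(A). Then there exists c > 0 independent of Δt ∈ (0,1) such that for all continuous φ with |φ(x)| ≤ ‖φ‖_{0,β}(1+|x|^β), we have |∫φ dμ − ∫φ dμ_Δt| ≤ c‖φ‖_{0,β}·Δt². -/

import Mathlib

open MeasureTheory Real

/-- Polynomial growth is dominated by a Gaussian factor. -/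
lemma poly_le_exp_aux (lam β : ℝ) (hlam : 0 < lam) (hβ : 0 ≤ β) :
    ∃ C ≥ 1, ∀ x : ℝ, 1 + |x| ^ β ≤ C * Real.exp (lam / 2 * x ^ 2) := by
  refine ⟨1 + Real.exp (β ^ 2 / (2 * lam)), by nlinarith [Real.exp_pos (β ^ 2 / (2 * lam))], fun x => ?_⟩
  have hx2 : (0:ℝ) ≤ lam / 2 * x ^ 2 := by positivity
  have he1 : (1:ℝ) ≤ Real.exp (lam / 2 * x ^ 2) := by
    simpa using Real.exp_le_exp.2 hx2
  have hbd : |x| ^ β ≤ Real.exp (β ^ 2 / (2 * lam)) * Real.exp (lam / 2 * x ^ 2) := by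
    rw [← Real.exp_add]
    rcases le_or_gt (|x|) 1 with h | h
    · have : |x| ^ β ≤ 1 := Real.rpow_le_one (abs_nonneg x) h hβ
      refine this.trans (Real.one_le_exp (by positivity))
    · have hpos : 0 < |x| := lt_trans one_pos h
      rw [Real.rpow_def_of_pos hpos]
      apply Real.exp_le_exp.2
      have hlog : Real.log |x| ≤ |x| := Real.log_le_self (abs_nonneg x)
      have h1 : Real.log |x| * β ≤ β * |x| := by
        rw [mul_comm]; exact mul_le_mul_of_nonneg_left hlog hβ
      refine h1.trans ?_
      have hsq : |x| ^ 2 = x ^ 2 := sq_abs x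
      have h2 : β ^ 2 / (2 * lam) + lam / 2 * x ^ 2 = (β ^ 2 + lam ^ 2 * x ^ 2) / (2 * lam) := by
        field_simp
      rw [h2, le_div_iff₀ (by linarith)]
      nlinarith [sq_nonneg (β - lam * |x|), hsq]
  calc 1 + |x| ^ β
      ≤ Real.exp (lam / 2 * x ^ 2) + Real.exp (β ^ 2 / (2 * lam)) * Real.exp (lam / 2 * x ^ 2) :=
        add_le_add he1 hbd
    _ = (1 + Real.exp (β ^ 2 / (2 * lam))) * Real.exp (lam / 2 * x ^ 2) := by ring

/-- Support reduction to `[-R, R]` with `R = sqrt((4/λ)|log Δt|)` incurs an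
error of order `Δt²` for test functions of polynomial growth. -/
theorem support_reduction_error
    (lam β : ℝ) (hlam : 0 < lam) (hβ : 0 ≤ β)
    (μ : Measure ℝ) [IsProbabilityMeasure μ]
    (hmom : Integrable (fun x => Real.exp (lam * x ^ 2)) μ) :
    ∃ c > 0, ∀ dt : ℝ, 0 < dt → dt < 1 →
      ∀ φ : ℝ → ℝ, Continuous φ →
      ∀ B : ℝ, 0 ≤ B → (∀ x, |φ x| ≤ B * (1 + |x| ^ β)) →
      |(∫ x, φ x ∂μ) -
        ∫ x, φ x ∂(μ.restrict (Set.Ioo (-(Real.sqrt ((4 / lam) * |Real.log dt|)))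
            (Real.sqrt ((4 / lam) * |Real.log dt|)))
          + μ (Set.Iic (-(Real.sqrt ((4 / lam) * |Real.log dt|))))
              • Measure.dirac (-(Real.sqrt ((4 / lam) * |Real.log dt|)))
          + μ (Set.Ici (Real.sqrt ((4 / lam) * |Real.log dt|)))
              • Measure.dirac (Real.sqrt ((4 / lam) * |Real.log dt|)))| ≤
        c * B * dt ^ 2 := by
  obtain ⟨C, hC1, hC⟩ := poly_le_exp_aux lam β hlam hβ
  have hC0 : 0 < C := lt_of_lt_of_le one_pos hC1
  set K := ∫ x, Real.exp (lam * x ^ 2) ∂μ with hK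
  have hK0 : 0 ≤ K := integral_nonneg fun x => (Real.exp_pos _).le
  refine ⟨4 * C * (K + 1), by positivity, fun dt hdt hdt1 φ hφ B hB hφB => ?_⟩
  set R := Real.sqrt ((4 / lam) * |Real.log dt|) with hR
  -- basic facts about R
  have hlog : Real.log dt < 0 := Real.log_neg hdt hdt1
  have hargnn : 0 ≤ (4 / lam) * |Real.log dt| := by positivity
  have hR0 : 0 ≤ R := Real.sqrt_nonneg _
  have hRsq : R ^ 2 = (4 / lam) * |Real.log dt| := Real.sq_sqrt hargnn
  have hRR : -R < R := by
    have : 0 < R := Real.sqrt_pos.2 (by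
      have : 0 < |Real.log dt| := abs_pos.2 (ne_of_lt hlog)
      positivity)
    linarith
  have hexpR : Real.exp (-(lam / 2) * R ^ 2) = dt ^ 2 := by
    have : -(lam / 2) * R ^ 2 = 2 * Real.log dt := by
      rw [hRsq, abs_of_neg hlog]; field_simp; ring
    rw [this]
    have : Real.exp (2 * Real.log dt) = (Real.exp (Real.log dt)) ^ (2:ℕ) := by
      rw [← Real.exp_nat_mul]; norm_num
    rw [this, Real.exp_log hdt]
  have hdt2 : (0:ℝ) < dt ^ 2 := by positivity
  -- integrability facts
  have hexpmono : ∀ x : ℝ, Real.exp (lam / 2 * x ^ 2) ≤ Real.exp (lam * x ^ 2) := by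
    intro x
    apply Real.exp_le_exp.2
    nlinarith [sq_nonneg x]
  have hpoly : Integrable (fun x => 1 + |x| ^ β) μ := by
    refine (hmom.const_mul C).mono ?_ (Filter.Eventually.of_forall fun x => ?_)
    · exact (continuous_const.add (continuous_abs.rpow_const
        (fun x => Or.inr hβ))).aestronglyMeasurable
    · have h1 : (0:ℝ) ≤ 1 + |x| ^ β := by positivity
      rw [Real.norm_eq_abs, Real.norm_eq_abs, abs_of_nonneg h1,
        abs_of_nonneg (by positivity : (0:ℝ) ≤ C * Real.exp (lam * x ^ 2))]
      exact (hC x).trans (mul_le_mul_of_nonneg_left (hexpmono x) hC0.le)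
  have hint : Integrable φ μ := by
    refine (hpoly.const_mul B).mono hφ.aestronglyMeasurable
      (Filter.Eventually.of_forall fun x => ?_)
    rw [Real.norm_eq_abs, Real.norm_eq_abs,
      abs_of_nonneg (by positivity : (0:ℝ) ≤ B * (1 + |x| ^ β))]
    exact hφB x
  have hdirac : ∀ a : ℝ, Integrable φ (Measure.dirac a) := by
    intro a
    refine ⟨hφ.aestronglyMeasurable, ?_⟩
    rw [HasFiniteIntegral, lintegral_dirac]
    exact ENNReal.coe_lt_top
  have hμfin : ∀ s : Set ℝ, μ s ≠ ⊤ := fun s => measure_ne_top μ s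
  -- decomposition of the LHS integral
  have hdisj1 : Disjoint (Set.Iio R) (Set.Ici R) := Set.Iio_disjoint_Ici le_rfl
  have hdisj2 : Disjoint (Set.Iic (-R)) (Set.Ioo (-R) R) :=
    (Set.Iic_disjoint_Ioc le_rfl).mono_right Set.Ioo_subset_Ioc_self
  have hsplit : ∫ x, φ x ∂μ = (∫ x in Set.Iic (-R), φ x ∂μ)
      + (∫ x in Set.Ioo (-R) R, φ x ∂μ) + ∫ x in Set.Ici R, φ x ∂μ := by
    have h1 : ∫ x, φ x ∂μ
        = (∫ x in Set.Iio R, φ x ∂μ) + ∫ x in Set.Ici R, φ x ∂μ := by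
      rw [← setIntegral_union hdisj1 measurableSet_Ici hint.integrableOn hint.integrableOn,
        Set.Iio_union_Ici, setIntegral_univ]
    have h2 : ∫ x in Set.Iio R, φ x ∂μ
        = (∫ x in Set.Iic (-R), φ x ∂μ) + ∫ x in Set.Ioo (-R) R, φ x ∂μ := by
      rw [← setIntegral_union hdisj2 measurableSet_Ioo hint.integrableOn hint.integrableOn,
        Set.Iic_union_Ioo_eq_Iio hRR]
    rw [h1, h2]
  -- the RHS integral
  have hRHS : ∫ x, φ x ∂(μ.restrict (Set.Ioo (-R) R)
        + μ (Set.Iic (-R)) • Measure.dirac (-R) + μ (Set.Ici R) • Measure.dirac R)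
      = (∫ x in Set.Ioo (-R) R, φ x ∂μ)
        + (μ (Set.Iic (-R))).toReal * φ (-R) + (μ (Set.Ici R)).toReal * φ R := by
    rw [integral_add_measure (hint.restrict.add_measure ((hdirac _).smul_measure (hμfin _)))
        ((hdirac _).smul_measure (hμfin _)),
      integral_add_measure hint.restrict ((hdirac _).smul_measure (hμfin _)),
      integral_smul_measure, integral_smul_measure, integral_dirac, integral_dirac,
      smul_eq_mul, smul_eq_mul]
  -- key tail estimate
  have hside : ∀ s : Set ℝ, MeasurableSet s → (∀ x ∈ s, R ≤ |x|) →
      ∫ x in s, (1 + |x| ^ β) ∂μ ≤ C * dt ^ 2 * K := by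
    intro s hs hxs
    have hpt : ∀ x ∈ s, 1 + |x| ^ β ≤ C * dt ^ 2 * Real.exp (lam * x ^ 2) := by
      intro x hx
      have hxR : R ^ 2 ≤ x ^ 2 := by
        have h := hxs x hx
        nlinarith [sq_abs x, abs_nonneg x]
      have hsplitexp : Real.exp (lam / 2 * x ^ 2)
          = Real.exp (lam * x ^ 2) * Real.exp (-(lam / 2) * x ^ 2) := by
        rw [← Real.exp_add]; ring_nf
      have hle : Real.exp (-(lam / 2) * x ^ 2) ≤ dt ^ 2 := by
        rw [← hexpR]
        apply Real.exp_le_exp.2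
        nlinarith
      calc 1 + |x| ^ β ≤ C * Real.exp (lam / 2 * x ^ 2) := hC x
        _ = C * (Real.exp (lam * x ^ 2) * Real.exp (-(lam / 2) * x ^ 2)) := by rw [hsplitexp]
        _ ≤ C * (Real.exp (lam * x ^ 2) * dt ^ 2) := by
            apply mul_le_mul_of_nonneg_left _ hC0.le
            exact mul_le_mul_of_nonneg_left hle (Real.exp_pos _).le
        _ = C * dt ^ 2 * Real.exp (lam * x ^ 2) := by ring
    calc ∫ x in s, (1 + |x| ^ β) ∂μ
        ≤ ∫ x in s, C * dt ^ 2 * Real.exp (lam * x ^ 2) ∂μ :=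
          setIntegral_mono_on hpoly.integrableOn (hmom.const_mul _).integrableOn hs hpt
      _ = C * dt ^ 2 * ∫ x in s, Real.exp (lam * x ^ 2) ∂μ := integral_const_mul _ _
      _ ≤ C * dt ^ 2 * K := by
          apply mul_le_mul_of_nonneg_left _ (by positivity)
          exact setIntegral_le_integral hmom
            (Filter.Eventually.of_forall fun x => (Real.exp_pos _).le)
  -- bound for set integrals of φ
  have hφside : ∀ s : Set ℝ, MeasurableSet s → (∀ x ∈ s, R ≤ |x|) →
      |∫ x in s, φ x ∂μ| ≤ B * (C * dt ^ 2 * K) := by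
    intro s hs hxs
    calc |∫ x in s, φ x ∂μ| ≤ ∫ x in s, |φ x| ∂μ := by
          simpa [Real.norm_eq_abs] using
            norm_integral_le_integral_norm (μ := μ.restrict s) φ
      _ ≤ ∫ x in s, B * (1 + |x| ^ β) ∂μ :=
          setIntegral_mono_on hint.abs.integrableOn (hpoly.const_mul B).integrableOn hs
            fun x _ => hφB x
      _ = B * ∫ x in s, (1 + |x| ^ β) ∂μ := integral_const_mul _ _
      _ ≤ B * (C * dt ^ 2 * K) := mul_le_mul_of_nonneg_left (hside s hs hxs) hB
  -- bound for the dirac terms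
  have hconst : ∀ s : Set ℝ, MeasurableSet s → (∀ x ∈ s, R ≤ |x|) → ∀ a : ℝ, |a| = R →
      |(μ s).toReal * φ a| ≤ B * (C * dt ^ 2 * K) := by
    intro s hs hxs a ha
    have h1 : |(μ s).toReal * φ a| ≤ (μ s).toReal * (B * (1 + R ^ β)) := by
      rw [abs_mul, abs_of_nonneg ENNReal.toReal_nonneg]
      refine mul_le_mul_of_nonneg_left ?_ ENNReal.toReal_nonneg
      have := hφB a
      rwa [ha] at this
    have h2 : (μ s).toReal * (B * (1 + R ^ β)) = B * ∫ x in s, (1 + R ^ β) ∂μ := by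
      rw [setIntegral_const, smul_eq_mul, measureReal_def]; ring
    have h3 : ∫ x in s, (1 + R ^ β) ∂μ ≤ ∫ x in s, (1 + |x| ^ β) ∂μ := by
      exact setIntegral_mono_on (integrableOn_const (measure_ne_top μ s))
        hpoly.integrableOn hs
        fun x hx => add_le_add (le_refl 1) (Real.rpow_le_rpow hR0 (hxs x hx) hβ)
    calc |(μ s).toReal * φ a| ≤ (μ s).toReal * (B * (1 + R ^ β)) := h1
      _ = B * ∫ x in s, (1 + R ^ β) ∂μ := h2
      _ ≤ B * ∫ x in s, (1 + |x| ^ β) ∂μ := mul_le_mul_of_nonneg_left h3 hB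
      _ ≤ B * (C * dt ^ 2 * K) := mul_le_mul_of_nonneg_left (hside s hs hxs) hB
  have hxs1 : ∀ x ∈ Set.Iic (-R), R ≤ |x| := by
    intro x hx
    simp only [Set.mem_Iic] at hx
    rw [abs_of_nonpos (by linarith)]
    linarith
  have hxs3 : ∀ x ∈ Set.Ici R, R ≤ |x| := by
    intro x hx
    simp only [Set.mem_Ici] at hx
    rw [abs_of_nonneg (by linarith)]
    exact hx
  have t1 := hφside _ measurableSet_Iic hxs1
  have t3 := hφside _ measurableSet_Ici hxs3
  have t2 := hconst _ measurableSet_Iic hxs1 (-R) (by rw [abs_neg, abs_of_nonneg hR0])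
  have t4 := hconst _ measurableSet_Ici hxs3 R (abs_of_nonneg hR0)
  rw [hsplit, hRHS]
  have hfinal : |(∫ x in Set.Iic (-R), φ x ∂μ) + (∫ x in Set.Ioo (-R) R, φ x ∂μ)
      + (∫ x in Set.Ici R, φ x ∂μ)
      - ((∫ x in Set.Ioo (-R) R, φ x ∂μ)
        + (μ (Set.Iic (-R))).toReal * φ (-R) + (μ (Set.Ici R)).toReal * φ R)|
      ≤ 4 * (B * (C * dt ^ 2 * K)) := by
    have habs : |(∫ x in Set.Iic (-R), φ x ∂μ) + (∫ x in Set.Ioo (-R) R, φ x ∂μ)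
        + (∫ x in Set.Ici R, φ x ∂μ)
        - ((∫ x in Set.Ioo (-R) R, φ x ∂μ)
          + (μ (Set.Iic (-R))).toReal * φ (-R) + (μ (Set.Ici R)).toReal * φ R)|
        ≤ |∫ x in Set.Iic (-R), φ x ∂μ| + |∫ x in Set.Ici R, φ x ∂μ|
          + |(μ (Set.Iic (-R))).toReal * φ (-R)| + |(μ (Set.Ici R)).toReal * φ R| := by
      have : (∫ x in Set.Iic (-R), φ x ∂μ) + (∫ x in Set.Ioo (-R) R, φ x ∂μ)
          + (∫ x in Set.Ici R, φ x ∂μ)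
          - ((∫ x in Set.Ioo (-R) R, φ x ∂μ)
            + (μ (Set.Iic (-R))).toReal * φ (-R) + (μ (Set.Ici R)).toReal * φ R)
          = (∫ x in Set.Iic (-R), φ x ∂μ) + (∫ x in Set.Ici R, φ x ∂μ)
            + (-((μ (Set.Iic (-R))).toReal * φ (-R))) + (-((μ (Set.Ici R)).toReal * φ R)) := by
        ring
      rw [this]
      calc |_ + _ + _ + (-((μ (Set.Ici R)).toReal * φ R))|
          ≤ |_ + _ + _| + |(-((μ (Set.Ici R)).toReal * φ R))| := abs_add_le _ _
        _ ≤ |_ + _| + |(-((μ (Set.Iic (-R))).toReal * φ (-R)))|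
            + |(-((μ (Set.Ici R)).toReal * φ R))| := by
            gcongr; exact abs_add_le _ _
        _ ≤ |∫ x in Set.Iic (-R), φ x ∂μ| + |∫ x in Set.Ici R, φ x ∂μ|
            + |(-((μ (Set.Iic (-R))).toReal * φ (-R)))|
            + |(-((μ (Set.Ici R)).toReal * φ R))| := by
            gcongr; exact abs_add_le _ _
        _ = |∫ x in Set.Iic (-R), φ x ∂μ| + |∫ x in Set.Ici R, φ x ∂μ|
            + |(μ (Set.Iic (-R))).toReal * φ (-R)| + |(μ (Set.Ici R)).toReal * φ R| := by
            rw [abs_neg, abs_neg]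
    refine habs.trans ?_
    linarith
  refine hfinal.trans ?_
  have hKle : K ≤ K + 1 := by linarith
  calc 4 * (B * (C * dt ^ 2 * K)) = 4 * C * K * B * dt ^ 2 := by ring
    _ ≤ 4 * C * (K + 1) * B * dt ^ 2 := by
        have : 4 * C * K ≤ 4 * C * (K + 1) := by nlinarith
        exact mul_le_mul_of_nonneg_right (mul_le_mul_of_nonneg_right this hB) hdt2.le
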